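/- If a finitely generated amenable group G satisfies the Haagerup-type condition for some length function ℓ, then its growth rate (minimal n with |B_p^{ℓ_S}| ≤ C p^n for a word-length ℓ_S of a finite generating set) is at most 3. Consequently no group containing ℤ⁴, or the discrete Heisenberg group (both of growth 4), admits any length function satisfying the Haagerup-type condition. -/

import Mathlib

open scoped Classical

/-- The `ℓ²`-norm of a finitely supported function. -/
noncomputable def fnorm2 {G : Type*} (f : MonoidAlgebra ℂ G) : ℝ :=
  Real.sqrt (∑ x ∈ f.coeff.support, ‖f.coeff x‖ ^ 2)

/-- `f` is supported on the sphere `E_k = {x : ℓ x = k}`. -/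
def SuppOnSphere {G : Type*} (ℓ : G → ℕ) (k : ℕ) (f : MonoidAlgebra ℂ G) : Prop :=
  ∀ x, f.coeff x ≠ 0 → ℓ x = k

/-- `P_m f`: the restriction (orthogonal projection in `ℓ²(G)`) of `f` to the
sphere `E_m = {x : ℓ x = m}`. -/
noncomputable def sphProj {G : Type*} (ℓ : G → ℕ) (m : ℕ) (f : MonoidAlgebra ℂ G) :
    MonoidAlgebra ℂ G :=
  MonoidAlgebra.ofCoeff (f.coeff.filter (fun x => ℓ x = m))

/-- `ℓ` is an integer-valued length function on the group `G`. -/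
def IsLengthFunction {G : Type*} [Group G] (ℓ : G → ℕ) : Prop :=
  ℓ 1 = 0 ∧ (∀ g : G, ℓ g⁻¹ = ℓ g) ∧ ∀ g h : G, ℓ (g * h) ≤ ℓ g + ℓ h

/-- The Haagerup-type condition for `(G, ℓ)` with constant `C`:
`‖P_m f P_n‖ ≤ C ‖f‖₂` for every `f` supported on the sphere `E_k`, expressed
concretely on `ℓ²(G)`: for every finitely supported `ξ` supported on `E_n`,
`‖P_m (f * ξ)‖₂ ≤ C ‖f‖₂ ‖ξ‖₂` (where `f * ξ` is the convolution). -/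
def GroupHaagerupCond {G : Type*} [Group G] (ℓ : G → ℕ) (C : ℝ) : Prop :=
  ∀ (k m n : ℕ) (f ξ : MonoidAlgebra ℂ G),
    SuppOnSphere ℓ k f → SuppOnSphere ℓ n ξ →
    fnorm2 (sphProj ℓ m (f * ξ)) ≤ C * fnorm2 f * fnorm2 ξ

/-- Amenability of a discrete group, in the Følner form. -/
def FolnerAmenable (G : Type*) [Group G] : Prop :=
  ∀ (S : Finset G) (ε : ℝ), 0 < ε → ∃ F : Finset G, F.Nonempty ∧
    ∀ s ∈ S, (((F.image (fun x => s * x)) \ F).card : ℝ) ≤ ε * F.card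

/-- The word-length function of a (symmetric) generating set `S`. -/
noncomputable def wordLength {G : Type*} [Group G] (S : Finset G) (g : G) : ℕ :=
  sInf {n : ℕ | ∃ l : List G, (∀ x ∈ l, x ∈ S) ∧ l.length = n ∧ l.prod = g}

/-- The balls of the length function `ℓ` grow at most polynomially of degree `d`. -/
def PolyGrowthBound {G : Type*} (ℓ : G → ℕ) (d : ℕ) : Prop :=
  ∃ c : ℝ, ∀ p : ℕ, 1 ≤ p →
    {x : G | ℓ x ≤ p}.Finite ∧ (Nat.card {x : G | ℓ x ≤ p} : ℝ) ≤ c * (p : ℝ) ^ d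

/-- The discrete Heisenberg group: `ℤ³` with
`(a,b,c)·(a',b',c') = (a+a', b+b', c+c'+a·b')`. -/
def Heisenberg : Type := ℤ × ℤ × ℤ

instance : One Heisenberg := ⟨((0 : ℤ), (0 : ℤ), (0 : ℤ))⟩

instance : Mul Heisenberg :=
  ⟨fun x y => (x.1 + y.1, x.2.1 + y.2.1, x.2.2 + y.2.2 + x.1 * y.2.1)⟩

instance : Inv Heisenberg := ⟨fun x => (-x.1, -x.2.1, -x.2.2 + x.1 * x.2.1)⟩

instance : Group Heisenberg where
  mul_assoc a b c := by
    refine Prod.ext ?_ (Prod.ext ?_ ?_)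
    · show a.1 + b.1 + c.1 = a.1 + (b.1 + c.1); ring
    · show a.2.1 + b.2.1 + c.2.1 = a.2.1 + (b.2.1 + c.2.1); ring
    · show a.2.2 + b.2.2 + a.1 * b.2.1 + c.2.2 + (a.1 + b.1) * c.2.1 =
        a.2.2 + (b.2.2 + c.2.2 + b.1 * c.2.1) + a.1 * (b.2.1 + c.2.1)
      ring
  one_mul a := by
    refine Prod.ext ?_ (Prod.ext ?_ ?_)
    · show 0 + a.1 = a.1; ring
    · show 0 + a.2.1 = a.2.1; ring
    · show 0 + a.2.2 + 0 * a.2.1 = a.2.2; ring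
  mul_one a := by
    refine Prod.ext ?_ (Prod.ext ?_ ?_)
    · show a.1 + 0 = a.1; ring
    · show a.2.1 + 0 = a.2.1; ring
    · show a.2.2 + 0 + a.1 * 0 = a.2.2; ring
  inv_mul_cancel a := by
    refine Prod.ext ?_ (Prod.ext ?_ ?_)
    · show -a.1 + a.1 = 0; ring
    · show -a.2.1 + a.2.1 = 0; ring
    · show -a.2.2 + a.1 * a.2.1 + a.2.2 + -a.1 * a.2.1 = 0; ring

open scoped Pointwise

namespace Aux
variable {G : Type*}

lemma fnorm2_nonneg (f : MonoidAlgebra ℂ G) : 0 ≤ fnorm2 f := Real.sqrt_nonneg _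

lemma sum_sq_eq (f : MonoidAlgebra ℂ G) {s : Finset G} (hs : f.coeff.support ⊆ s) :
    ∑ x ∈ f.coeff.support, ‖f.coeff x‖ ^ 2 = ∑ x ∈ s, ‖f.coeff x‖ ^ 2 := by
  refine Finset.sum_subset hs fun x _ hx => ?_
  rw [Finsupp.notMem_support_iff.mp hx]; simp

lemma fnorm2_eq (f : MonoidAlgebra ℂ G) {s : Finset G} (hs : f.coeff.support ⊆ s) :
    fnorm2 f = Real.sqrt (∑ x ∈ s, ‖f.coeff x‖ ^ 2) := by rw [fnorm2, sum_sq_eq f hs]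

lemma fnorm2_sq (f : MonoidAlgebra ℂ G) {s : Finset G} (hs : f.coeff.support ⊆ s) :
    fnorm2 f ^ 2 = ∑ x ∈ s, ‖f.coeff x‖ ^ 2 := by
  rw [fnorm2_eq f hs, Real.sq_sqrt]; positivity

noncomputable def toE (s : Finset G) (f : MonoidAlgebra ℂ G) : EuclideanSpace ℂ s :=
  WithLp.toLp 2 (fun x => f.coeff x)

lemma fnorm2_eq_norm (f : MonoidAlgebra ℂ G) {s : Finset G} (hs : f.coeff.support ⊆ s) :
    fnorm2 f = ‖toE s f‖ := by
  rw [EuclideanSpace.norm_eq, fnorm2_eq f hs]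
  congr 1
  rw [← Finset.sum_coe_sort s (fun x => ‖f.coeff x‖ ^ 2)]
  rfl

lemma toE_sum {ι : Type*} (s : Finset G) (t : Finset ι) (h : ι → MonoidAlgebra ℂ G) :
    toE s (∑ i ∈ t, h i) = ∑ i ∈ t, toE s (h i) := by
  ext x
  rw [WithLp.ofLp_sum, Finset.sum_apply]
  show (∑ i ∈ t, h i).coeff x = _
  rw [MonoidAlgebra.coeff_sum]
  exact Finsupp.finset_sum_apply t (fun i => (h i).coeff) x

lemma fnorm2_sum_le {ι : Type*} (t : Finset ι) (h : ι → MonoidAlgebra ℂ G) :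
    fnorm2 (∑ i ∈ t, h i) ≤ ∑ i ∈ t, fnorm2 (h i) := by
  let s : Finset G := (∑ i ∈ t, h i).coeff.support ∪ t.biUnion (fun i => (h i).coeff.support)
  have h1 : (∑ i ∈ t, h i).coeff.support ⊆ s := Finset.subset_union_left
  have h2 : ∀ i ∈ t, (h i).coeff.support ⊆ s := fun i hi =>
    (Finset.subset_biUnion_of_mem (fun i => (h i).coeff.support) hi).trans Finset.subset_union_right
  rw [fnorm2_eq_norm _ h1, toE_sum]
  refine (norm_sum_le _ _).trans (Finset.sum_le_sum fun i hi => ?_)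
  rw [fnorm2_eq_norm _ (h2 i hi)]

lemma sphProj_apply (ℓ : G → ℕ) (m : ℕ) (f : MonoidAlgebra ℂ G) (x : G) :
    (sphProj ℓ m f).coeff x = if ℓ x = m then f.coeff x else 0 := by
  simp [sphProj, Finsupp.filter_apply]

lemma sum_sphProj (ℓ : G → ℕ) (f : MonoidAlgebra ℂ G) {T : Finset ℕ}
    (hT : f.coeff.support.image ℓ ⊆ T) : ∑ m ∈ T, sphProj ℓ m f = f := by
  ext x
  rw [MonoidAlgebra.coeff_sum, Finsupp.finset_sum_apply]
  simp only [sphProj_apply]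
  rw [Finset.sum_ite_eq T (ℓ x) (fun _ => f.coeff x)]
  by_cases hx : f.coeff x = 0
  · simp [hx]
  · rw [if_pos (hT (Finset.mem_image_of_mem ℓ (Finsupp.mem_support_iff.mpr hx)))]

lemma sum_sq_sphProj (ℓ : G → ℕ) (f : MonoidAlgebra ℂ G) {T : Finset ℕ}
    (hT : f.coeff.support.image ℓ ⊆ T) :
    ∑ m ∈ T, fnorm2 (sphProj ℓ m f) ^ 2 = fnorm2 f ^ 2 := by
  have hsupp : ∀ m, (sphProj ℓ m f).coeff.support = f.coeff.support.filter (fun x => ℓ x = m) := by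
    intro m; exact Finsupp.support_filter _ _
  have : ∀ m, fnorm2 (sphProj ℓ m f) ^ 2 = ∑ x ∈ f.coeff.support.filter (fun x => ℓ x = m), ‖f.coeff x‖ ^ 2 := by
    intro m
    have hsub : (sphProj ℓ m f).coeff.support ⊆ f.coeff.support.filter (fun x => ℓ x = m) := by
      rw [hsupp m]
    rw [fnorm2_sq _ hsub]
    refine Finset.sum_congr rfl fun x hx => ?_
    rw [sphProj_apply, if_pos (Finset.mem_filter.mp hx).2]
  simp only [this]
  rw [fnorm2_sq f (le_refl _)]
  exact Finset.sum_fiberwise_of_maps_to (fun x hx => hT (Finset.mem_image_of_mem ℓ hx)) _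

lemma sphProj_sum {ι : Type*} (ℓ : G → ℕ) (m : ℕ) (t : Finset ι) (h : ι → MonoidAlgebra ℂ G) :
    sphProj ℓ m (∑ i ∈ t, h i) = ∑ i ∈ t, sphProj ℓ m (h i) := by
  ext x
  rw [MonoidAlgebra.coeff_sum, Finsupp.finset_sum_apply, sphProj_apply, MonoidAlgebra.coeff_sum,
    Finsupp.finset_sum_apply]
  simp only [sphProj_apply]
  split_ifs with h1
  · rfl
  · exact (Finset.sum_const_zero).symm

lemma suppOnSphere_sphProj (ℓ : G → ℕ) (k : ℕ) (f : MonoidAlgebra ℂ G) :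
    SuppOnSphere ℓ k (sphProj ℓ k f) := by
  intro x hx
  rw [sphProj_apply] at hx
  by_contra h
  exact hx (if_neg h)

end Aux


namespace Aux
variable {G : Type*}

noncomputable def ind (s : Finset G) : MonoidAlgebra ℂ G :=
  ∑ a ∈ s, MonoidAlgebra.single a 1

lemma ind_apply (s : Finset G) (x : G) : (ind s).coeff x = if x ∈ s then 1 else 0 := by
  rw [ind, MonoidAlgebra.coeff_sum, Finsupp.finset_sum_apply]
  simp only [MonoidAlgebra.single_apply]
  exact Finset.sum_ite_eq' s x (fun _ => 1)

lemma ind_support (s : Finset G) : (ind s).coeff.support ⊆ s := by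
  intro x hx
  rw [Finsupp.mem_support_iff, ind_apply] at hx
  by_contra h
  exact hx (if_neg h)

lemma fnorm2_ind_sq (s : Finset G) : fnorm2 (ind s) ^ 2 = s.card := by
  rw [fnorm2_sq _ (ind_support s)]
  rw [Finset.sum_congr rfl (fun x hx => by rw [ind_apply, if_pos hx, norm_one, one_pow])]
  simp

lemma fnorm2_ind (s : Finset G) : fnorm2 (ind s) = Real.sqrt s.card := by
  have := fnorm2_ind_sq s
  rw [← this, Real.sqrt_sq (fnorm2_nonneg _)]

lemma sphProj_ind (ℓ : G → ℕ) (k : ℕ) (s : Finset G) :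
    sphProj ℓ k (ind s) = ind (s.filter (fun x => ℓ x = k)) := by
  ext x
  simp only [sphProj_apply, ind_apply, Finset.mem_filter]
  split_ifs <;> first | rfl | tauto

lemma fnorm2_single_one [Group G] : fnorm2 (MonoidAlgebra.single (1:G) (1:ℂ)) = 1 := by
  have hs : (MonoidAlgebra.single (1:G) (1:ℂ)).coeff.support ⊆ {1} := Finsupp.support_single_subset
  rw [fnorm2_eq _ hs]
  simp [MonoidAlgebra.single_apply]

lemma one_le_C [Group G] {ℓ : G → ℕ} {C : ℝ} (hl : IsLengthFunction ℓ)
    (hC : GroupHaagerupCond ℓ C) : 1 ≤ C := by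
  have hsupp : SuppOnSphere ℓ 0 (MonoidAlgebra.single (1:G) (1:ℂ)) := by
    intro x hx
    have : x = 1 := by
      by_contra h
      exact hx (by rw [MonoidAlgebra.single_apply, if_neg (Ne.symm h)])
    rw [this, hl.1]
  have h := hC 0 0 0 _ _ hsupp hsupp
  rw [MonoidAlgebra.single_mul_single, one_mul, mul_one] at h
  have hproj : sphProj ℓ 0 (MonoidAlgebra.single (1:G) (1:ℂ)) = MonoidAlgebra.single 1 1 := by
    ext x
    rw [sphProj_apply]
    by_cases hx : x = 1
    · rw [if_pos (by rw [hx, hl.1])]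
    · rw [MonoidAlgebra.single_apply, if_neg (Ne.symm hx)]
      split_ifs <;> rfl
  rw [hproj, fnorm2_single_one] at h
  linarith

end Aux
namespace Aux
variable {G : Type*}

lemma card_filter_window (s : Finset ℕ) (P : ℕ → Prop) [DecidablePred P] (k c : ℕ)
    (h : ∀ x, P x → c ≤ k + x ∧ x ≤ k + c) : (s.filter P).card ≤ 2*k+1 := by
  have hsub : s.filter P ⊆ Finset.Icc (c - k) (c + k) := by
    intro x hx
    have := (Finset.mem_filter.mp hx).2
    have := h x this
    rw [Finset.mem_Icc]
    omega
  calc (s.filter P).card ≤ (Finset.Icc (c-k) (c+k)).card := Finset.card_le_card hsub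
    _ ≤ 2*k+1 := by rw [Nat.card_Icc]; omega

lemma sphProj_mul_eq_zero [Group G] {ℓ : G → ℕ} (hl : IsLengthFunction ℓ) (k m n : ℕ)
    (u v : MonoidAlgebra ℂ G) (hu : SuppOnSphere ℓ k u) (hv : SuppOnSphere ℓ n v)
    (hmn : ¬(m ≤ k + n ∧ n ≤ k + m)) : sphProj ℓ m (u * v) = 0 := by
  ext x
  rw [sphProj_apply]
  simp only [MonoidAlgebra.coeff_zero, Finsupp.coe_zero, Pi.zero_apply]
  split_ifs with hm
  · by_contra hx0
    have hx : x ∈ (u * v).coeff.support := Finsupp.mem_support_iff.mpr hx0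
    have hmem := MonoidAlgebra.support_coeff_mul_subset u v hx
    rw [Finset.mem_mul] at hmem
    obtain ⟨a, ha, b, hb, hab⟩ := hmem
    have hka : ℓ a = k := hu a (Finsupp.mem_support_iff.mp ha)
    have hnb : ℓ b = n := hv b (Finsupp.mem_support_iff.mp hb)
    have h1 : ℓ (a * b) ≤ k + n := by rw [← hka, ← hnb]; exact hl.2.2 a b
    have h2 : ℓ b ≤ ℓ a⁻¹ + ℓ (a * b) := by
      have := hl.2.2 a⁻¹ (a * b)
      rwa [inv_mul_cancel_left] at this
    rw [hl.2.1] at h2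
    rw [hab, hm] at h1 h2
    rw [hka] at h2
    rw [hnb] at h2
    omega
  · rfl

lemma sum_nonneg_window (Mk T : Finset ℕ) (P : ℕ → ℕ → Prop) [∀ m n, Decidable (P m n)] (k : ℕ) (b : ℕ → ℝ)
    (hb : ∀ n, 0 ≤ b n)
    (hcard : ∀ n ∈ T, ((Mk.filter (fun m => P m n)).card : ℝ) ≤ 2*k+1) :
    ∑ m ∈ Mk, ∑ n ∈ T.filter (fun n => P m n), b n ≤ (2*k+1) * ∑ n ∈ T, b n := by
  have h1 : ∀ m, ∑ n ∈ T.filter (fun n => P m n), b n = ∑ n ∈ T, if P m n then b n else 0 := by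
    intro m; rw [Finset.sum_filter]
  simp only [h1]
  rw [Finset.sum_comm]
  rw [Finset.mul_sum]
  refine Finset.sum_le_sum fun n hn => ?_
  have : ∑ m ∈ Mk, (if P m n then b n else 0) = ((Mk.filter (fun m => P m n)).card : ℝ) * b n := by
    rw [← Finset.sum_filter, Finset.sum_const, nsmul_eq_mul]
  rw [this]
  exact mul_le_mul_of_nonneg_right (hcard n hn) (hb n)

lemma upper_bound [Group G] {ℓ : G → ℕ} {C : ℝ} (hl : IsLengthFunction ℓ)
    (hC : GroupHaagerupCond ℓ C) (hC1 : 1 ≤ C) (A F : Finset G) (p : ℕ)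
    (hA : ∀ a ∈ A, ℓ a ≤ p) :
    fnorm2 (ind A * ind F) ^ 2 ≤ C^2 * (2*p+1)^2 * (p+1) * A.card * F.card := by
  set f := ind A with hf
  set ξ := ind F with hξ
  set T := F.image ℓ with hT
  have hTξ : ξ.coeff.support.image ℓ ⊆ T := Finset.image_subset_image (ind_support F)
  have hKf : f.coeff.support.image ℓ ⊆ Finset.range (p+1) := by
    intro m hm
    obtain ⟨x, hx, rfl⟩ := Finset.mem_image.mp hm
    exact Finset.mem_range.mpr (Nat.lt_succ_of_le (hA x (ind_support A hx)))
  have hC0 : (0:ℝ) ≤ C := le_trans zero_le_one hC1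
  -- per-k bound
  have hk : ∀ k ∈ Finset.range (p+1),
      fnorm2 (sphProj ℓ k f * ξ) ≤ C * (2*↑p+1) * fnorm2 (sphProj ℓ k f) * fnorm2 ξ := by
    intro k hkmem
    have hkp : k ≤ p := Nat.lt_succ_iff.mp (Finset.mem_range.mp hkmem)
    set fk := sphProj ℓ k f with hfk
    set Mk := (fk * ξ).coeff.support.image ℓ with hMk
    have hfk_sphere : SuppOnSphere ℓ k fk := suppOnSphere_sphProj ℓ k f
    have hdec : fnorm2 (fk*ξ)^2 = ∑ m ∈ Mk, fnorm2 (sphProj ℓ m (fk*ξ))^2 :=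
      (sum_sq_sphProj ℓ _ (le_refl _)).symm
    have hmuldec : ∀ m, sphProj ℓ m (fk*ξ) =
        ∑ n ∈ T.filter (fun n => m ≤ k + n ∧ n ≤ k + m), sphProj ℓ m (fk * sphProj ℓ n ξ) := by
      intro m
      conv_lhs => rw [← sum_sphProj ℓ ξ hTξ, Finset.mul_sum, sphProj_sum]
      refine (Finset.sum_filter_of_ne fun n _ hne => ?_).symm
      by_contra hcl
      exact hne (sphProj_mul_eq_zero hl k m n fk _ hfk_sphere (suppOnSphere_sphProj ℓ n ξ) hcl)
    -- per m
    have hm : ∀ m, fnorm2 (sphProj ℓ m (fk*ξ))^2 ≤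
        (2*(k:ℝ)+1) * ∑ n ∈ T.filter (fun n => m ≤ k + n ∧ n ≤ k + m),
          (C * fnorm2 fk * fnorm2 (sphProj ℓ n ξ))^2 := by
      intro m
      have htri : fnorm2 (sphProj ℓ m (fk*ξ)) ≤
          ∑ n ∈ T.filter (fun n => m ≤ k + n ∧ n ≤ k + m),
            (C * fnorm2 fk * fnorm2 (sphProj ℓ n ξ)) := by
        rw [hmuldec m]
        refine (fnorm2_sum_le _ _).trans (Finset.sum_le_sum fun n _ => ?_)
        exact hC k m n fk _ hfk_sphere (suppOnSphere_sphProj ℓ n ξ)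
      have hsq := pow_le_pow_left₀ (fnorm2_nonneg _) htri 2
      refine hsq.trans ?_
      -- Cauchy--Schwarz with ones
      have hcs := Finset.sum_mul_sq_le_sq_mul_sq
        (T.filter (fun n => m ≤ k + n ∧ n ≤ k + m)) (fun _ => (1:ℝ))
        (fun n => C * fnorm2 fk * fnorm2 (sphProj ℓ n ξ))
      simp only [one_mul, one_pow] at hcs
      refine hcs.trans ?_
      rw [Finset.sum_const, nsmul_eq_mul, mul_one]
      refine mul_le_mul_of_nonneg_right ?_ (Finset.sum_nonneg fun n _ => sq_nonneg _)
      have hw := card_filter_window T (fun n => m ≤ k + n ∧ n ≤ k + m) k m (fun x hx => hx)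
      have hw2 : ((T.filter (fun n => m ≤ k + n ∧ n ≤ k + m)).card : ℝ) ≤ ((2*k+1 : ℕ) : ℝ) :=
        Nat.cast_le.mpr hw
      push_cast at hw2
      linarith
    -- sum over m
    have hsum : ∑ m ∈ Mk, fnorm2 (sphProj ℓ m (fk*ξ))^2 ≤
        (2*(k:ℝ)+1) * ((2*(k:ℝ)+1) * ∑ n ∈ T, (C * fnorm2 fk * fnorm2 (sphProj ℓ n ξ))^2) := by
      refine (Finset.sum_le_sum (fun m _ => hm m)).trans ?_
      rw [← Finset.mul_sum]
      have h2k : (0:ℝ) ≤ 2*(k:ℝ)+1 := by positivity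
      refine mul_le_mul_of_nonneg_left ?_ h2k
      refine sum_nonneg_window Mk T (fun m n => m ≤ k + n ∧ n ≤ k + m) k
        (fun n => (C * fnorm2 fk * fnorm2 (sphProj ℓ n ξ))^2)
        (fun n => sq_nonneg _) (fun n _ => ?_)
      have hw := card_filter_window Mk (fun m => m ≤ k + n ∧ n ≤ k + m) k n
        (fun x hx => ⟨hx.2, hx.1⟩)
      have hw2 : ((Mk.filter (fun m => m ≤ k + n ∧ n ≤ k + m)).card : ℝ) ≤ ((2*k+1 : ℕ) : ℝ) :=
        Nat.cast_le.mpr hw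
      push_cast at hw2
      linarith
    have hsplit : ∑ n ∈ T, (C * fnorm2 fk * fnorm2 (sphProj ℓ n ξ))^2
        = C^2 * fnorm2 fk^2 * fnorm2 ξ^2 := by
      have : ∀ n, (C * fnorm2 fk * fnorm2 (sphProj ℓ n ξ))^2
          = C^2 * fnorm2 fk^2 * fnorm2 (sphProj ℓ n ξ)^2 := by intro n; ring
      simp only [this]
      rw [← Finset.mul_sum, sum_sq_sphProj ℓ ξ hTξ]
    have hfinal : fnorm2 (fk*ξ)^2 ≤ (C * (2*(k:ℝ)+1) * fnorm2 fk * fnorm2 ξ)^2 := by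
      rw [hdec]
      refine (hsum.trans ?_)
      rw [hsplit]
      have hexp : (C * (2*(k:ℝ)+1) * fnorm2 fk * fnorm2 ξ)^2
          = (2*(k:ℝ)+1) * ((2*(k:ℝ)+1) * (C^2 * fnorm2 fk^2 * fnorm2 ξ^2)) := by ring
      rw [hexp]
    have h1 : fnorm2 (fk*ξ) ≤ C * (2*(k:ℝ)+1) * fnorm2 fk * fnorm2 ξ := by
      have hrhs : (0:ℝ) ≤ C * (2*(k:ℝ)+1) * fnorm2 fk * fnorm2 ξ := by
        have h2k' : (0:ℝ) ≤ 2*(k:ℝ)+1 := by positivity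
        exact mul_nonneg (mul_nonneg (mul_nonneg hC0 h2k') (fnorm2_nonneg _)) (fnorm2_nonneg _)
      exact le_of_pow_le_pow_left₀ two_ne_zero hrhs hfinal
    refine h1.trans ?_
    have hkk : (2*(k:ℝ)+1) ≤ 2*(p:ℝ)+1 := by
      have : (k:ℝ) ≤ p := Nat.cast_le.mpr hkp
      linarith
    have hmono : C * (2*(k:ℝ)+1) ≤ C * (2*(p:ℝ)+1) := mul_le_mul_of_nonneg_left hkk hC0
    exact mul_le_mul_of_nonneg_right
      (mul_le_mul_of_nonneg_right hmono (fnorm2_nonneg fk)) (fnorm2_nonneg ξ)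
  -- assemble
  have hdecf : f * ξ = ∑ k ∈ Finset.range (p+1), sphProj ℓ k f * ξ := by
    conv_lhs => rw [← sum_sphProj ℓ f hKf]
    rw [Finset.sum_mul]
  have htri : fnorm2 (f * ξ) ≤ ∑ k ∈ Finset.range (p+1), fnorm2 (sphProj ℓ k f * ξ) := by
    rw [hdecf]; exact fnorm2_sum_le _ _
  have hstep : fnorm2 (f * ξ) ≤ C * (2*(p:ℝ)+1) * fnorm2 ξ * ∑ k ∈ Finset.range (p+1), fnorm2 (sphProj ℓ k f) := by
    refine htri.trans ?_
    rw [Finset.mul_sum]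
    refine Finset.sum_le_sum fun k hkm => (hk k hkm).trans (le_of_eq (by ring))
  have hCS2 : (∑ k ∈ Finset.range (p+1), fnorm2 (sphProj ℓ k f))^2 ≤ ((p:ℝ)+1) * fnorm2 f ^2 := by
    have hcs := Finset.sum_mul_sq_le_sq_mul_sq (Finset.range (p+1)) (fun _ => (1:ℝ))
      (fun k => fnorm2 (sphProj ℓ k f))
    simp only [one_mul, one_pow] at hcs
    rw [Finset.sum_const, nsmul_eq_mul, mul_one, Finset.card_range] at hcs
    rw [sum_sq_sphProj ℓ f hKf] at hcs
    exact_mod_cast hcs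
  have hgoal : fnorm2 (f * ξ)^2 ≤ (C * (2*(p:ℝ)+1) * fnorm2 ξ)^2 * (((p:ℝ)+1) * fnorm2 f^2) := by
    have h2 := pow_le_pow_left₀ (fnorm2_nonneg _) hstep 2
    refine h2.trans ?_
    rw [mul_pow]
    refine mul_le_mul_of_nonneg_left hCS2 (by positivity)
  refine hgoal.trans (le_of_eq ?_)
  rw [hf, hξ]
  rw [show (C * (2*(p:ℝ)+1) * fnorm2 (ind F))^2 * (((p:ℝ)+1) * fnorm2 (ind A)^2)
      = C^2 * (2*(p:ℝ)+1)^2 * ((p:ℝ)+1) * fnorm2 (ind A)^2 * fnorm2 (ind F)^2 from by ring]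
  rw [fnorm2_ind_sq, fnorm2_ind_sq]

end Aux
namespace Aux
variable {G : Type*}

lemma ind_mul_ind [Group G] (A F : Finset G) :
    (ind A : MonoidAlgebra ℂ G) * ind F = ∑ a ∈ A, ∑ b ∈ F, MonoidAlgebra.single (a*b) 1 := by
  rw [ind, ind, Finset.sum_mul_sum]
  refine Finset.sum_congr rfl fun a _ => Finset.sum_congr rfl fun b _ => ?_
  rw [MonoidAlgebra.single_mul_single, one_mul]

lemma ind_mul_ind_apply [Group G] (A F : Finset G) (y : G) :
    ((ind A : MonoidAlgebra ℂ G) * ind F).coeff y = ((A.filter fun a => a⁻¹ * y ∈ F).card : ℂ) := by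
  rw [ind_mul_ind, MonoidAlgebra.coeff_sum, Finsupp.finset_sum_apply]
  have hinner : ∀ a : G, (∑ b ∈ F, MonoidAlgebra.single (a*b) (1:ℂ)).coeff y
      = if a⁻¹ * y ∈ F then 1 else 0 := by
    intro a
    rw [MonoidAlgebra.coeff_sum, Finsupp.finset_sum_apply]
    have : ∀ b : G, (MonoidAlgebra.single (a*b) (1:ℂ)).coeff y = if b = a⁻¹*y then 1 else 0 := by
      intro b
      rw [MonoidAlgebra.single_apply]
      exact if_congr (by constructor <;> intro h <;> [exact eq_inv_mul_iff_mul_eq.mpr h;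
        exact eq_inv_mul_iff_mul_eq.mp h]) rfl rfl
    simp only [this]
    exact Finset.sum_ite_eq' F (a⁻¹*y) (fun _ => 1)
  simp only [hinner]
  exact Finset.sum_boole _ _
-- norm version
lemma ind_mul_ind_norm [Group G] (A F : Finset G) (y : G) :
    ‖((ind A : MonoidAlgebra ℂ G) * ind F).coeff y‖ = ((A.filter fun a => a⁻¹ * y ∈ F).card : ℝ) := by
  rw [ind_mul_ind_apply]
  simp

lemma sum_norm_ind_mul_ind [Group G] (A F : Finset G) :
    ∑ y ∈ A * F, ‖((ind A : MonoidAlgebra ℂ G) * ind F).coeff y‖ = (A.card : ℝ) * F.card := by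
  simp only [ind_mul_ind_norm]
  have hb : ∀ y ∈ A * F, ((A.filter fun a => a⁻¹ * y ∈ F).card : ℝ)
      = ∑ a ∈ A, if a⁻¹ * y ∈ F then (1:ℝ) else 0 := by
    intro y _; rw [Finset.sum_boole]
  rw [Finset.sum_congr rfl hb, Finset.sum_comm]
  have hrow : ∀ a ∈ A, (∑ y ∈ A * F, if a⁻¹ * y ∈ F then (1:ℝ) else 0) = F.card := by
    intro a ha
    rw [Finset.sum_boole]
    congr 1
    have : (A * F).filter (fun y => a⁻¹ * y ∈ F) = F.image (fun b => a * b) := by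
      ext y
      simp only [Finset.mem_filter, Finset.mem_image, Finset.mem_mul]
      constructor
      · rintro ⟨-, hy⟩
        exact ⟨a⁻¹ * y, hy, by group⟩
      · rintro ⟨b, hb, rfl⟩
        exact ⟨⟨a, ha, b, hb, rfl⟩, by rwa [inv_mul_cancel_left]⟩
    rw [this, Finset.card_image_of_injective _ (mul_right_injective a)]
  rw [Finset.sum_congr rfl hrow, Finset.sum_const, nsmul_eq_mul]

lemma support_ind_mul_ind [Group G] (A F : Finset G) :
    ((ind A : MonoidAlgebra ℂ G) * ind F).coeff.support ⊆ A * F :=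
  (MonoidAlgebra.support_coeff_mul_subset _ _).trans
    (Finset.mul_subset_mul (ind_support A) (ind_support F))

lemma lower_bound [Group G] (A F : Finset G) :
    ((A.card : ℝ) * F.card)^2 ≤
      (((ind A : MonoidAlgebra ℂ G) * ind F).coeff.support.card : ℝ)
        * fnorm2 ((ind A : MonoidAlgebra ℂ G) * ind F)^2 := by
  set g := (ind A : MonoidAlgebra ℂ G) * ind F with hg
  have h1 : (A.card : ℝ) * F.card = ∑ y ∈ g.coeff.support, ‖g.coeff y‖ := by
    rw [← sum_norm_ind_mul_ind A F]
    refine (Finset.sum_subset (support_ind_mul_ind A F) fun y _ hy => ?_).symm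
    rw [Finsupp.notMem_support_iff.mp hy, norm_zero]
  rw [h1]
  have hcs := Finset.sum_mul_sq_le_sq_mul_sq g.coeff.support (fun _ => (1:ℝ)) (fun y => ‖g.coeff y‖)
  simp only [one_mul, one_pow] at hcs
  rw [Finset.sum_const, nsmul_eq_mul, mul_one] at hcs
  refine hcs.trans (le_of_eq ?_)
  congr 1
  exact (fnorm2_sq g (le_refl _)).symm

lemma core [Group G] {ℓ : G → ℕ} {C : ℝ} (hl : IsLengthFunction ℓ)
    (hC : GroupHaagerupCond ℓ C) (A : Finset G) (p : ℕ) (hA : ∀ a ∈ A, ℓ a ≤ p)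
    (hF : ∀ ε : ℝ, 0 < ε → ∃ F : Finset G, F.Nonempty ∧
      ∀ a ∈ A, (((F.image (fun x => a * x)) \ F).card : ℝ) ≤ ε * F.card) :
    (A.card : ℝ) ≤ 2 * C^2 * (2*(p:ℝ)+1)^2 * ((p:ℝ)+1) := by
  have hC1 : 1 ≤ C := one_le_C hl hC
  rcases A.eq_empty_or_nonempty with hemp | hne
  · rw [hemp]; simp; positivity
  have hA1 : (1:ℝ) ≤ A.card := by exact_mod_cast Finset.card_pos.mpr hne
  obtain ⟨F, hFne, hFol⟩ := hF (1/(A.card:ℝ)) (by positivity)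
  have hF1 : (1:ℝ) ≤ F.card := by exact_mod_cast Finset.card_pos.mpr hFne
  -- support bound
  have hsupp : (((ind A : MonoidAlgebra ℂ G) * ind F).coeff.support.card : ℝ) ≤ 2 * F.card := by
    have hsub : ((ind A : MonoidAlgebra ℂ G) * ind F).coeff.support ⊆
        F ∪ A.biUnion (fun a => (F.image (fun x => a * x)) \ F) := by
      refine (support_ind_mul_ind A F).trans ?_
      intro y hy
      rw [Finset.mem_mul] at hy
      obtain ⟨a, ha, b, hb, rfl⟩ := hy
      by_cases hyF : a * b ∈ F
      · exact Finset.mem_union_left _ hyF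
      · refine Finset.mem_union_right _ (Finset.mem_biUnion.mpr ⟨a, ha, ?_⟩)
        exact Finset.mem_sdiff.mpr ⟨Finset.mem_image.mpr ⟨b, hb, rfl⟩, hyF⟩
    have h1 : (((ind A : MonoidAlgebra ℂ G) * ind F).coeff.support.card : ℝ) ≤
        ((F ∪ A.biUnion (fun a => (F.image (fun x => a * x)) \ F)).card : ℝ) :=
      Nat.cast_le.mpr (Finset.card_le_card hsub)
    refine h1.trans ?_
    have h2 : ((F ∪ A.biUnion (fun a => (F.image (fun x => a * x)) \ F)).card : ℝ) ≤
        (F.card : ℝ) + ((A.biUnion (fun a => (F.image (fun x => a * x)) \ F)).card : ℝ) := by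
      exact_mod_cast Finset.card_union_le _ _
    refine h2.trans ?_
    have h3 : ((A.biUnion (fun a => (F.image (fun x => a * x)) \ F)).card : ℝ) ≤
        ∑ a ∈ A, (((F.image (fun x => a * x)) \ F).card : ℝ) := by
      exact_mod_cast Finset.card_biUnion_le
    have h4 : ∑ a ∈ A, (((F.image (fun x => a * x)) \ F).card : ℝ) ≤
        ∑ a ∈ A, (1/(A.card:ℝ)) * F.card := Finset.sum_le_sum fun a ha => hFol a ha
    rw [Finset.sum_const, nsmul_eq_mul] at h4
    have : (A.card : ℝ) * ((1/(A.card:ℝ)) * F.card) = F.card := by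
      field_simp
    rw [this] at h4
    linarith [h3.trans h4]
  have hub := upper_bound hl hC hC1 A F p hA
  have hlb := lower_bound A F
  have hcomb : ((A.card : ℝ) * F.card)^2 ≤
      2 * F.card * (C^2 * (2*(p:ℝ)+1)^2 * ((p:ℝ)+1) * A.card * F.card) := by
    refine hlb.trans ?_
    refine mul_le_mul hsupp hub (by positivity) (by linarith)
  -- divide
  have hx : (0:ℝ) < (A.card:ℝ) * F.card^2 := by nlinarith
  nlinarith [hcomb, sq_nonneg ((A.card:ℝ) * F.card)]

end Aux
namespace Aux
variable {G : Type*}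

lemma prod_length_le [Group G] {ℓ : G → ℕ} (hl : IsLengthFunction ℓ) (M : ℕ) :
    ∀ l : List G, (∀ x ∈ l, ℓ x ≤ M) → ℓ l.prod ≤ l.length * M := by
  intro l
  induction l with
  | nil => intro _; simp [hl.1]
  | cons a t ih =>
    intro h
    rw [List.prod_cons]
    calc ℓ (a * t.prod) ≤ ℓ a + ℓ t.prod := hl.2.2 _ _
      _ ≤ M + t.length * M := add_le_add (h a List.mem_cons_self) (ih fun x hx => h x (List.mem_cons_of_mem a hx))
      _ = (a :: t).length * M := by rw [List.length_cons]; ring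

lemma wordLength_spec [Group G] (S : Finset G)
    (hgen : ∀ g : G, ∃ l : List G, (∀ x ∈ l, x ∈ S) ∧ l.prod = g) (g : G) :
    ∃ l : List G, (∀ x ∈ l, x ∈ S) ∧ l.length = wordLength S g ∧ l.prod = g := by
  obtain ⟨l, hls, hp⟩ := hgen g
  have hne : {n : ℕ | ∃ l : List G, (∀ x ∈ l, x ∈ S) ∧ l.length = n ∧ l.prod = g}.Nonempty :=
    ⟨l.length, l, hls, rfl, hp⟩
  obtain ⟨l', h1, h2, h3⟩ := Nat.sInf_mem hne
  exact ⟨l', h1, h2, h3⟩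

lemma part1 (G : Type) [Group G] (S : Finset G)
    (hgen : ∀ g : G, ∃ l : List G, (∀ x ∈ l, x ∈ S) ∧ l.prod = g)
    (ham : FolnerAmenable G) (ℓ : G → ℕ) (C : ℝ) (hl : IsLengthFunction ℓ)
    (hC : GroupHaagerupCond ℓ C) : PolyGrowthBound (wordLength S) 3 := by
  set M := S.sup ℓ with hM
  have hMb : ∀ s ∈ S, ℓ s ≤ M := fun s hs => Finset.le_sup hs
  have hlen : ∀ g : G, ℓ g ≤ M * wordLength S g := by
    intro g
    obtain ⟨l, h1, h2, h3⟩ := wordLength_spec S hgen g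
    calc ℓ g = ℓ l.prod := by rw [h3]
      _ ≤ l.length * M := prod_length_le hl M l (fun x hx => hMb x (h1 x hx))
      _ = M * wordLength S g := by rw [h2]; ring
  have hC1 : 1 ≤ C := one_le_C hl hC
  have key : ∀ (p : ℕ) (A : Finset G), (∀ a ∈ A, wordLength S a ≤ p) →
      (A.card : ℝ) ≤ 2*C^2*(2*((M*p : ℕ):ℝ)+1)^2*(((M*p : ℕ):ℝ)+1) := by
    intro p A hA
    refine core hl hC A (M*p) (fun a ha => ?_) (fun ε hε => ham A ε hε)
    exact le_trans (hlen a) (Nat.mul_le_mul_left M (hA a ha))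
  refine ⟨2*C^2*(2*(M:ℝ)+1)^2*((M:ℝ)+1), fun p hp => ?_⟩
  have hp1 : (1:ℝ) ≤ (p:ℝ) := by exact_mod_cast hp
  have bound : ∀ A : Finset G, (∀ a ∈ A, wordLength S a ≤ p) →
      (A.card : ℝ) ≤ 2*C^2*(2*(M:ℝ)+1)^2*((M:ℝ)+1) * (p:ℝ)^3 := by
    intro A hA
    refine (key p A hA).trans ?_
    have hcast : ((M*p : ℕ):ℝ) = (M:ℝ)*(p:ℝ) := by push_cast; ring
    rw [hcast]
    have hM0 : (0:ℝ) ≤ M := Nat.cast_nonneg M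
    have e1 : 2*(M:ℝ)*(p:ℝ)+1 ≤ (2*(M:ℝ)+1)*(p:ℝ) := by nlinarith
    have e2 : (M:ℝ)*(p:ℝ)+1 ≤ ((M:ℝ)+1)*(p:ℝ) := by nlinarith
    have h2C : (0:ℝ) ≤ 2*C^2 := by positivity
    have ha : (0:ℝ) ≤ 2*(M:ℝ)*(p:ℝ)+1 := by positivity
    have hb : (0:ℝ) ≤ (M:ℝ)*(p:ℝ)+1 := by positivity
    have hsq : (2*(M:ℝ)*(p:ℝ)+1)^2 ≤ ((2*(M:ℝ)+1)*(p:ℝ))^2 := pow_le_pow_left₀ ha e1 2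
    have hmain : (2*(M:ℝ)*(p:ℝ)+1)^2*((M:ℝ)*(p:ℝ)+1) ≤ (2*(M:ℝ)+1)^2*((M:ℝ)+1)*(p:ℝ)^3 := by
      have := mul_le_mul hsq e2 hb (by positivity : (0:ℝ) ≤ ((2*(M:ℝ)+1)*(p:ℝ))^2)
      calc (2*(M:ℝ)*(p:ℝ)+1)^2*((M:ℝ)*(p:ℝ)+1) ≤ ((2*(M:ℝ)+1)*(p:ℝ))^2*(((M:ℝ)+1)*(p:ℝ)) := this
        _ = (2*(M:ℝ)+1)^2*((M:ℝ)+1)*(p:ℝ)^3 := by ring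
    calc 2*C^2*(2*((M:ℝ)*(p:ℝ))+1)^2*((M:ℝ)*(p:ℝ)+1)
        = 2*C^2*((2*(M:ℝ)*(p:ℝ)+1)^2*((M:ℝ)*(p:ℝ)+1)) := by ring
      _ ≤ 2*C^2*((2*(M:ℝ)+1)^2*((M:ℝ)+1)*(p:ℝ)^3) := mul_le_mul_of_nonneg_left hmain h2C
      _ = 2*C^2*(2*(M:ℝ)+1)^2*((M:ℝ)+1) * (p:ℝ)^3 := by ring
  have hfin : {x : G | wordLength S x ≤ p}.Finite := by
    by_contra hinf
    have hinf' : Set.Infinite {x : G | wordLength S x ≤ p} := hinf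
    obtain ⟨t, hts, htc⟩ := hinf'.exists_subset_card_eq
      (⌈2*C^2*(2*(M:ℝ)+1)^2*((M:ℝ)+1) * (p:ℝ)^3⌉₊ + 1)
    have hb := bound t (fun a ha => hts ha)
    rw [htc] at hb
    have : (2*C^2*(2*(M:ℝ)+1)^2*((M:ℝ)+1) * (p:ℝ)^3) ≤
        (⌈2*C^2*(2*(M:ℝ)+1)^2*((M:ℝ)+1) * (p:ℝ)^3⌉₊ : ℝ) := Nat.le_ceil _
    push_cast at hb
    linarith
  refine ⟨hfin, ?_⟩
  have hcard : Nat.card {x : G | wordLength S x ≤ p} = hfin.toFinset.card := by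
    rw [Nat.card_coe_set_eq, Set.ncard_eq_toFinset_card _ hfin]
  rw [hcard]
  exact bound hfin.toFinset (fun a ha => (Set.Finite.mem_toFinset hfin).mp ha)

end Aux
namespace Aux

lemma contra {G : Type} [Group G] {ℓ : G → ℕ} {C : ℝ} (hl : IsLengthFunction ℓ)
    (hC : GroupHaagerupCond ℓ C) {H : Type*} [Group H] [DecidableEq H] (φ : H →* G)
    (hφ : Function.Injective φ) (A : ℕ → Finset H) (K : ℕ)
    (hcard : ∀ p : ℕ, ((p:ℝ))^4 ≤ (A p).card)
    (hlen : ∀ p : ℕ, ∀ a ∈ A p, ℓ (φ a) ≤ K * p)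
    (hFol : ∀ p : ℕ, ∀ ε : ℝ, 0 < ε → ∃ F : Finset H, F.Nonempty ∧
      ∀ a ∈ A p, (((F.image (fun x => a * x)) \ F).card : ℝ) ≤ ε * F.card) : False := by
  have key : ∀ p : ℕ, ((p:ℝ))^4 ≤ 2*C^2*(2*((K*p : ℕ):ℝ)+1)^2*(((K*p : ℕ):ℝ)+1) := by
    intro p
    refine (hcard p).trans ?_
    have hc : (((A p).image φ).card : ℝ) = (A p).card := by
      rw [Finset.card_image_of_injective _ hφ]
    rw [← hc]
    refine core hl hC ((A p).image φ) (K*p) ?_ ?_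
    · intro a ha
      obtain ⟨b, hb, rfl⟩ := Finset.mem_image.mp ha
      exact hlen p b hb
    · intro ε hε
      obtain ⟨F, hFne, hFc⟩ := hFol p ε hε
      refine ⟨F.image φ, hFne.image φ, ?_⟩
      intro a ha
      obtain ⟨b, hb, rfl⟩ := Finset.mem_image.mp ha
      have him : (F.image φ).image (fun x => φ b * x) = (F.image (fun x => b * x)).image φ := by
        rw [Finset.image_image, Finset.image_image]
        refine Finset.image_congr fun x _ => ?_
        simp [map_mul]
      rw [him, ← Finset.image_sdiff _ _ hφ,
        Finset.card_image_of_injective _ hφ, Finset.card_image_of_injective _ hφ]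
      exact hFc b hb
  -- derive contradiction
  set D : ℝ := 2*C^2*(2*(K:ℝ)+1)^2*((K:ℝ)+1) with hD
  have hC1 : 1 ≤ C := one_le_C hl hC
  have hD0 : 0 < D := by
    rw [hD]; positivity
  have hbound : ∀ p : ℕ, 1 ≤ p → ((p:ℝ))^4 ≤ D * (p:ℝ)^3 := by
    intro p hp
    have hp1 : (1:ℝ) ≤ (p:ℝ) := by exact_mod_cast hp
    refine (key p).trans ?_
    have hK0 : (0:ℝ) ≤ K := Nat.cast_nonneg K
    have hcast : ((K*p : ℕ):ℝ) = (K:ℝ)*(p:ℝ) := by push_cast; ring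
    rw [hcast]
    have e1 : 2*((K:ℝ)*(p:ℝ))+1 ≤ (2*(K:ℝ)+1)*(p:ℝ) := by nlinarith
    have e2 : (K:ℝ)*(p:ℝ)+1 ≤ ((K:ℝ)+1)*(p:ℝ) := by nlinarith
    have ha : (0:ℝ) ≤ 2*((K:ℝ)*(p:ℝ))+1 := by positivity
    have hb : (0:ℝ) ≤ (K:ℝ)*(p:ℝ)+1 := by positivity
    have hsq : (2*((K:ℝ)*(p:ℝ))+1)^2 ≤ ((2*(K:ℝ)+1)*(p:ℝ))^2 := pow_le_pow_left₀ ha e1 2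
    have h2C : (0:ℝ) ≤ 2*C^2 := by positivity
    have hmul := mul_le_mul hsq e2 hb (by positivity : (0:ℝ) ≤ ((2*(K:ℝ)+1)*(p:ℝ))^2)
    calc 2*C^2*(2*((K:ℝ)*(p:ℝ))+1)^2*((K:ℝ)*(p:ℝ)+1)
        = 2*C^2*((2*((K:ℝ)*(p:ℝ))+1)^2*((K:ℝ)*(p:ℝ)+1)) := by ring
      _ ≤ 2*C^2*(((2*(K:ℝ)+1)*(p:ℝ))^2*(((K:ℝ)+1)*(p:ℝ))) := mul_le_mul_of_nonneg_left hmul h2C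
      _ = D * (p:ℝ)^3 := by rw [hD]; ring
  set p : ℕ := ⌈D⌉₊ + 1 with hpdef
  have hp1 : 1 ≤ p := by omega
  have hpD : D < (p:ℝ) := by
    have := Nat.le_ceil D
    have h2 : ((⌈D⌉₊ : ℕ):ℝ) < ((⌈D⌉₊ + 1 : ℕ):ℝ) := by exact_mod_cast Nat.lt_succ_self _
    rw [hpdef]
    push_cast
    push_cast at h2
    linarith
  have hb := hbound p hp1
  have hpp : (0:ℝ) < (p:ℝ)^3 := by
    have : (0:ℝ) < (p:ℝ) := by exact_mod_cast hp1
    positivity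
  nlinarith

end Aux
namespace Aux

lemma len_pow {G : Type*} [Group G] {ℓ : G → ℕ} (hl : IsLengthFunction ℓ) (g : G) :
    ∀ n : ℕ, ℓ (g^n) ≤ n * ℓ g := by
  intro n
  induction n with
  | zero => simp [hl.1]
  | succ n ih =>
    rw [pow_succ]
    calc ℓ (g^n * g) ≤ ℓ (g^n) + ℓ g := hl.2.2 _ _
      _ ≤ n * ℓ g + ℓ g := by omega
      _ = (n+1) * ℓ g := by ring

abbrev Z4 := ℤ × ℤ × ℤ × ℤ

noncomputable def box4 (a b : ℤ) : Finset Z4 :=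
  (Finset.Icc a b) ×ˢ (Finset.Icc a b) ×ˢ (Finset.Icc a b) ×ˢ (Finset.Icc a b)

lemma mem_box4 {a b : ℤ} {x : Z4} : x ∈ box4 a b ↔
    (a ≤ x.1 ∧ x.1 ≤ b) ∧ (a ≤ x.2.1 ∧ x.2.1 ≤ b) ∧
    (a ≤ x.2.2.1 ∧ x.2.2.1 ≤ b) ∧ (a ≤ x.2.2.2 ∧ x.2.2.2 ≤ b) := by
  simp [box4, Finset.mem_product, Finset.mem_Icc, and_assoc]

lemma card_box4 (a b : ℤ) : (box4 a b).card = ((b+1-a).toNat)^4 := by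
  simp [box4, Finset.card_product, Int.card_Icc]
  ring

lemma box4_mono {a b a' b' : ℤ} (h1 : a' ≤ a) (h2 : b ≤ b') : box4 a b ⊆ box4 a' b' := by
  intro x hx
  rw [mem_box4] at hx ⊢
  omega

lemma z4_fol (p : ℕ) (ε : ℝ) (hε : 0 < ε) :
    ∃ F : Finset Z4, F.Nonempty ∧
      ∀ v ∈ box4 0 (p:ℤ), (((F.image (fun x => v + x)) \ F).card : ℝ) ≤ ε * F.card := by
  set N : ℕ := p + 1 + ⌈64*((p:ℝ)+1)/ε⌉₊ with hN
  have hmem0 : ((0,0,0,0) : Z4) ∈ box4 (-(N:ℤ)) (N:ℤ) := by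
    rw [mem_box4]
    simp only []
    omega
  refine ⟨box4 (-(N:ℤ)) N, ⟨_, hmem0⟩, ?_⟩
  intro v hv
  rw [mem_box4] at hv
  have hNp : p ≤ N := by omega
  set a : ℝ := 2*(N:ℝ)+2*(p:ℝ)+1 with hadef
  set b : ℝ := 2*(N:ℝ)-2*(p:ℝ)+1 with hbdef
  set c : ℝ := 2*(N:ℝ)+1 with hcdef
  have hNsub : ((N-p : ℕ):ℝ) = (N:ℝ)-(p:ℝ) := Nat.cast_sub hNp
  -- subset
  have hsub : ((box4 (-(N:ℤ)) N).image (fun x => v + x)) \ box4 (-(N:ℤ)) N ⊆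
      box4 (-(N:ℤ)-p) ((N:ℤ)+p) \ box4 (-(N:ℤ)+p) ((N:ℤ)-p) := by
    intro w hw
    rw [Finset.mem_sdiff] at hw ⊢
    obtain ⟨hw1, hw2⟩ := hw
    obtain ⟨x, hx, rfl⟩ := Finset.mem_image.mp hw1
    rw [mem_box4] at hx
    constructor
    · rw [mem_box4]
      simp only [Prod.fst_add, Prod.snd_add]
      omega
    · intro hmem
      exact hw2 (box4_mono (by omega) (by omega) hmem)
  have hcards : ((((box4 (-(N:ℤ)) N).image (fun x => v + x)) \ box4 (-(N:ℤ)) N).card : ℝ)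
      ≤ a^4 - b^4 := by
    have h1 := Finset.card_le_card hsub
    have hss : box4 (-(N:ℤ)+p) ((N:ℤ)-p) ⊆ box4 (-(N:ℤ)-p) ((N:ℤ)+p) :=
      box4_mono (by omega) (by omega)
    rw [Finset.card_sdiff_of_subset hss] at h1
    have hbig : (box4 (-(N:ℤ)-p) ((N:ℤ)+p)).card = (2*(N+p)+1)^4 := by
      rw [card_box4]; congr 1; omega
    have hsmall : (box4 (-(N:ℤ)+p) ((N:ℤ)-p)).card = (2*(N-p)+1)^4 := by
      rw [card_box4]; congr 1; omega
    rw [hbig, hsmall] at h1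
    have hle : (2*(N-p)+1)^4 ≤ (2*(N+p)+1)^4 := Nat.pow_le_pow_left (by omega) 4
    have h2 := (Nat.cast_le (α := ℝ)).mpr h1
    rw [Nat.cast_sub hle] at h2
    refine h2.trans (le_of_eq ?_)
    push_cast [hNsub]
    rw [hadef, hbdef]
    ring
  refine hcards.trans ?_
  have hcardF : ((box4 (-(N:ℤ)) N).card : ℝ) = c^4 := by
    rw [card_box4]
    have h' : ((N:ℤ)+1-(-(N:ℤ))).toNat = 2*N+1 := by omega
    rw [h', hcdef]
    push_cast
    ring
  rw [hcardF]
  -- real inequality: a^4 - b^4 ≤ ε * c^4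
  have hp0 : (0:ℝ) ≤ p := Nat.cast_nonneg p
  have hNr : (p:ℝ) + 1 ≤ (N:ℝ) := by
    have : p + 1 ≤ N := by omega
    exact_mod_cast this
  have hb0 : 0 ≤ b := by rw [hbdef]; linarith
  have hba : b ≤ a := by rw [hadef, hbdef]; linarith
  have ha0 : 0 ≤ a := le_trans hb0 hba
  have hc0 : 0 ≤ c := by rw [hcdef]; linarith
  have ha2c : a ≤ 2*c := by rw [hadef, hcdef]; linarith
  have hεc : 128*(p:ℝ) ≤ ε*c := by
    have hceil : 64*((p:ℝ)+1)/ε ≤ (⌈64*((p:ℝ)+1)/ε⌉₊ : ℝ) := Nat.le_ceil _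
    have hNge : (⌈64*((p:ℝ)+1)/ε⌉₊ : ℝ) ≤ (N:ℝ) := by
      have : (⌈64*((p:ℝ)+1)/ε⌉₊ : ℕ) ≤ N := by omega
      exact_mod_cast this
    have h64 : 64*((p:ℝ)+1) ≤ ε*(N:ℝ) := by
      rw [div_le_iff₀ hε] at hceil
      calc 64*((p:ℝ)+1) ≤ (⌈64*((p:ℝ)+1)/ε⌉₊ : ℝ) * ε := hceil
        _ ≤ (N:ℝ) * ε := mul_le_mul_of_nonneg_right hNge (le_of_lt hε)
        _ = ε*(N:ℝ) := by ring
    have hexp : ε*c = 2*(ε*(N:ℝ)) + ε := by rw [hcdef]; ring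
    rw [hexp]
    linarith
  have hterm : a^3+a^2*b+a*b^2+b^3 ≤ 4*a^3 := by
    have t1 : a^2*b ≤ a^2*a := mul_le_mul_of_nonneg_left hba (sq_nonneg a)
    have t2 : a*b^2 ≤ a*a^2 := by
      refine mul_le_mul_of_nonneg_left ?_ ha0
      nlinarith
    have t3 : b^3 ≤ a^3 := pow_le_pow_left₀ hb0 hba 3
    nlinarith
  have hfac : a^4 - b^4 = (a-b)*(a^3+a^2*b+a*b^2+b^3) := by ring
  have hab4 : a - b = 4*(p:ℝ) := by rw [hadef, hbdef]; ring
  have hstep1 : a^4 - b^4 ≤ 4*(p:ℝ)*(4*a^3) := by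
    rw [hfac, hab4]
    refine mul_le_mul_of_nonneg_left hterm (by positivity)
  have ha3 : a^3 ≤ 8*c^3 := by
    have h3 := pow_le_pow_left₀ ha0 ha2c 3
    calc a^3 ≤ (2*c)^3 := h3
      _ = 8*c^3 := by ring
  have hstep2 : 4*(p:ℝ)*(4*a^3) ≤ 128*(p:ℝ)*c^3 := by nlinarith
  have hstep3 : 128*(p:ℝ)*c^3 ≤ ε*c*c^3 := by
    refine mul_le_mul_of_nonneg_right hεc (by positivity)
  calc a^4 - b^4 ≤ 128*(p:ℝ)*c^3 := le_trans hstep1 hstep2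
    _ ≤ ε*c*c^3 := hstep3
    _ = ε*c^4 := by ring

end Aux
namespace Aux

noncomputable def embZ4 : Z4 ↪ Multiplicative Z4 := Multiplicative.ofAdd.toEmbedding

lemma embZ4_mul (v x : Z4) : Multiplicative.ofAdd v * Multiplicative.ofAdd x
    = Multiplicative.ofAdd (v + x) := (ofAdd_add v x).symm

lemma fol_transfer_add (F : Finset Z4) (v : Z4) :
    (((F.map embZ4).image (fun x => (embZ4 v) * x)) \ (F.map embZ4)).card
      = ((F.image (fun x => v + x)) \ F).card := by
  have hinj : Function.Injective (embZ4 : Z4 → Multiplicative Z4) := embZ4.injective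
  rw [Finset.map_eq_image]
  have him : (F.image (embZ4 : Z4 → Multiplicative Z4)).image (fun x => embZ4 v * x)
      = (F.image (fun x => v + x)).image (embZ4 : Z4 → Multiplicative Z4) := by
    rw [Finset.image_image, Finset.image_image]
    refine Finset.image_congr fun x _ => ?_
    show embZ4 v * embZ4 x = embZ4 (v + x)
    rfl
  rw [him, ← Finset.image_sdiff _ _ hinj, Finset.card_image_of_injective _ hinj]

lemma fol_transfer {H : Type*} [Group H] {G : Type} [Group G] (φ : H →* G)
    (hφ : Function.Injective φ) (F : Finset H) (b : H) :
    ((((F.image φ).image (fun x => φ b * x)) \ (F.image φ)).card : ℝ)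
      = (((F.image (fun x => b * x)) \ F).card : ℝ) := by
  have him : (F.image φ).image (fun x => φ b * x) = (F.image (fun x => b * x)).image φ := by
    rw [Finset.image_image, Finset.image_image]
    refine Finset.image_congr fun x _ => ?_
    simp [map_mul]
  rw [him, ← Finset.image_sdiff _ _ hφ, Finset.card_image_of_injective _ hφ]

lemma z4_no_haagerup {G : Type} [Group G] {ℓ : G → ℕ} {C : ℝ} (hl : IsLengthFunction ℓ)
    (hC : GroupHaagerupCond ℓ C) (φ : Multiplicative Z4 →* G)
    (hφ : Function.Injective φ) : False := by
  classical
  set g1 := φ (Multiplicative.ofAdd ((1,0,0,0) : Z4)) with hg1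
  set g2 := φ (Multiplicative.ofAdd ((0,1,0,0) : Z4)) with hg2
  set g3 := φ (Multiplicative.ofAdd ((0,0,1,0) : Z4)) with hg3
  set g4 := φ (Multiplicative.ofAdd ((0,0,0,1) : Z4)) with hg4
  set K : ℕ := ℓ g1 + ℓ g2 + ℓ g3 + ℓ g4 with hK
  set A : ℕ → Finset (Multiplicative Z4) := fun p => (box4 0 (p:ℤ)).map embZ4 with hA
  refine contra hl hC φ hφ A K ?_ ?_ ?_
  · -- card
    intro p
    rw [hA]
    simp only [Finset.card_map]
    rw [card_box4]
    have h1 : ((p:ℤ)+1-0).toNat = p+1 := by omega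
    rw [h1]
    have : ((p:ℝ)) ≤ ((p+1 : ℕ):ℝ) := by push_cast; linarith
    calc ((p:ℝ))^4 ≤ ((p+1:ℕ):ℝ)^4 := pow_le_pow_left₀ (Nat.cast_nonneg p) this 4
      _ = (((p+1)^4 : ℕ):ℝ) := by push_cast; ring
  · -- length
    intro p a ha
    rw [hA] at ha
    obtain ⟨v, hv, rfl⟩ := Finset.mem_map.mp ha
    rw [mem_box4] at hv
    obtain ⟨x1, x2, x3, x4⟩ := v
    simp only [] at hv
    have hdecomp : (Multiplicative.ofAdd ((x1,x2,x3,x4) : Z4))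
        = (Multiplicative.ofAdd ((1,0,0,0) : Z4))^(x1.toNat)
          * (Multiplicative.ofAdd ((0,1,0,0) : Z4))^(x2.toNat)
          * (Multiplicative.ofAdd ((0,0,1,0) : Z4))^(x3.toNat)
          * (Multiplicative.ofAdd ((0,0,0,1) : Z4))^(x4.toNat) := by
      have e1 : (Multiplicative.ofAdd ((1,0,0,0) : Z4))^(x1.toNat)
          = Multiplicative.ofAdd ((x1,0,0,0) : Z4) := by
        rw [← ofAdd_nsmul]
        congr 1
        have hnn : ((x1.toNat : ℤ)) = x1 := Int.toNat_of_nonneg hv.1.1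
        simp [Prod.ext_iff, nsmul_eq_mul, hnn]
      have e2 : (Multiplicative.ofAdd ((0,1,0,0) : Z4))^(x2.toNat)
          = Multiplicative.ofAdd ((0,x2,0,0) : Z4) := by
        rw [← ofAdd_nsmul]
        congr 1
        have hnn : ((x2.toNat : ℤ)) = x2 := Int.toNat_of_nonneg hv.2.1.1
        simp [Prod.ext_iff, nsmul_eq_mul, hnn]
      have e3 : (Multiplicative.ofAdd ((0,0,1,0) : Z4))^(x3.toNat)
          = Multiplicative.ofAdd ((0,0,x3,0) : Z4) := by
        rw [← ofAdd_nsmul]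
        congr 1
        have hnn : ((x3.toNat : ℤ)) = x3 := Int.toNat_of_nonneg hv.2.2.1.1
        simp [Prod.ext_iff, nsmul_eq_mul, hnn]
      have e4 : (Multiplicative.ofAdd ((0,0,0,1) : Z4))^(x4.toNat)
          = Multiplicative.ofAdd ((0,0,0,x4) : Z4) := by
        rw [← ofAdd_nsmul]
        congr 1
        have hnn : ((x4.toNat : ℤ)) = x4 := Int.toNat_of_nonneg hv.2.2.2.1
        simp [Prod.ext_iff, nsmul_eq_mul, hnn]
      rw [e1, e2, e3, e4, embZ4_mul, embZ4_mul, embZ4_mul]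
      congr 1
      simp [Prod.ext_iff]
    have hemb : embZ4 ((x1,x2,x3,x4) : Z4) = Multiplicative.ofAdd ((x1,x2,x3,x4) : Z4) := rfl
    rw [hemb, hdecomp, map_mul, map_mul, map_mul, map_pow, map_pow, map_pow, map_pow]
    have l1 : ℓ (g1^(x1.toNat)) ≤ x1.toNat * ℓ g1 := len_pow hl g1 _
    have l2 : ℓ (g2^(x2.toNat)) ≤ x2.toNat * ℓ g2 := len_pow hl g2 _
    have l3 : ℓ (g3^(x3.toNat)) ≤ x3.toNat * ℓ g3 := len_pow hl g3 _
    have l4 : ℓ (g4^(x4.toNat)) ≤ x4.toNat * ℓ g4 := len_pow hl g4 _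
    have b1 : x1.toNat ≤ p := by omega
    have b2 : x2.toNat ≤ p := by omega
    have b3 : x3.toNat ≤ p := by omega
    have b4 : x4.toNat ≤ p := by omega
    calc ℓ (g1^(x1.toNat) * g2^(x2.toNat) * g3^(x3.toNat) * g4^(x4.toNat))
        ≤ ℓ (g1^(x1.toNat) * g2^(x2.toNat) * g3^(x3.toNat)) + ℓ (g4^(x4.toNat)) := hl.2.2 _ _
      _ ≤ (ℓ (g1^(x1.toNat) * g2^(x2.toNat)) + ℓ (g3^(x3.toNat))) + ℓ (g4^(x4.toNat)) := by
          have := hl.2.2 (g1^(x1.toNat) * g2^(x2.toNat)) (g3^(x3.toNat)); omega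
      _ ≤ ((ℓ (g1^(x1.toNat)) + ℓ (g2^(x2.toNat))) + ℓ (g3^(x3.toNat))) + ℓ (g4^(x4.toNat)) := by
          have := hl.2.2 (g1^(x1.toNat)) (g2^(x2.toNat)); omega
      _ ≤ K * p := by
          rw [hK]
          have c1 : x1.toNat * ℓ g1 ≤ p * ℓ g1 := Nat.mul_le_mul_right _ b1
          have c2 : x2.toNat * ℓ g2 ≤ p * ℓ g2 := Nat.mul_le_mul_right _ b2
          have c3 : x3.toNat * ℓ g3 ≤ p * ℓ g3 := Nat.mul_le_mul_right _ b3
          have c4 : x4.toNat * ℓ g4 ≤ p * ℓ g4 := Nat.mul_le_mul_right _ b4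
          have : (ℓ g1 + ℓ g2 + ℓ g3 + ℓ g4) * p
              = p * ℓ g1 + p * ℓ g2 + p * ℓ g3 + p * ℓ g4 := by ring
          omega
  · -- Folner
    intro p ε hε
    obtain ⟨F, hFne, hFc⟩ := z4_fol p ε hε
    refine ⟨F.map embZ4, hFne.map, ?_⟩
    intro a ha
    rw [hA] at ha
    obtain ⟨v, hv, rfl⟩ := Finset.mem_map.mp ha
    rw [fol_transfer_add F v, Finset.card_map]
    exact hFc v hv

end Aux
noncomputable instance : DecidableEq Heisenberg :=
  fun a b => inferInstanceAs (Decidable (a = b))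

namespace Aux

def Hmk (a b c : ℤ) : Heisenberg := (a, b, c)

lemma Hmul_def (x y : Heisenberg) :
    x * y = Hmk (x.1 + y.1) (x.2.1 + y.2.1) (x.2.2 + y.2.2 + x.1 * y.2.1) := rfl

lemma Hinv_def (x : Heisenberg) : x⁻¹ = Hmk (-x.1) (-x.2.1) (-x.2.2 + x.1 * x.2.1) := rfl

lemma Hmk_mul (a b c a' b' c' : ℤ) :
    Hmk a b c * Hmk a' b' c' = Hmk (a+a') (b+b') (c+c'+a*b') := rfl

lemma Hmk_inv (a b c : ℤ) : (Hmk a b c)⁻¹ = Hmk (-a) (-b) (-c+a*b) := rfl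

lemma Hmk_fst (a b c : ℤ) : (Hmk a b c).1 = a := rfl
lemma Hmk_snd1 (a b c : ℤ) : (Hmk a b c).2.1 = b := rfl
lemma Hmk_snd2 (a b c : ℤ) : (Hmk a b c).2.2 = c := rfl

lemma Hmk_inj {a b c a' b' c' : ℤ} (h : Hmk a b c = Hmk a' b' c') :
    a = a' ∧ b = b' ∧ c = c' := by
  refine ⟨congrArg (fun w : Heisenberg => w.1) h, congrArg (fun w : Heisenberg => w.2.1) h,
    congrArg (fun w : Heisenberg => w.2.2) h⟩

lemma Hmk_congr {a b c a' b' c' : ℤ} (h1 : a = a') (h2 : b = b') (h3 : c = c') :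
    Hmk a b c = Hmk a' b' c' := by rw [h1, h2, h3]

lemma hx_pow (n : ℕ) : (Hmk 1 0 0)^n = Hmk n 0 0 := by
  induction n with
  | zero => rfl
  | succ n ih =>
    rw [pow_succ, ih, Hmk_mul]
    norm_num

lemma hy_pow (n : ℕ) : (Hmk 0 1 0)^n = Hmk 0 n 0 := by
  induction n with
  | zero => rfl
  | succ n ih =>
    rw [pow_succ, ih, Hmk_mul]
    norm_num

lemma hz_pow (n : ℕ) : (Hmk 0 0 1)^n = Hmk 0 0 n := by
  induction n with
  | zero => rfl
  | succ n ih =>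
    rw [pow_succ, ih, Hmk_mul]
    norm_num

lemma hz_decomp (e : ℕ) :
    Hmk 0 0 (e:ℤ) = (Hmk 1 0 0)^e.sqrt * (Hmk 0 1 0)^e.sqrt * ((Hmk 1 0 0)^e.sqrt)⁻¹
      * ((Hmk 0 1 0)^e.sqrt)⁻¹ * (Hmk 0 0 1)^(e - e.sqrt^2) := by
  set k := e.sqrt with hk
  have hk2 : k^2 ≤ e := Nat.sqrt_le' e
  have hcast : ((e - k^2 : ℕ) : ℤ) = (e:ℤ) - (k:ℤ)^2 := by
    push_cast [Nat.cast_sub hk2]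
    ring
  rw [hx_pow, hy_pow, hz_pow, Hmk_inv, Hmk_inv, Hmk_mul, Hmk_mul, Hmk_mul, Hmk_mul]
  rw [hcast]
  norm_num
  congr 1
  ring

noncomputable def boxH3 (a1 b1 a2 b2 a3 b3 : ℤ) : Finset Heisenberg :=
  ((Finset.Icc a1 b1) ×ˢ (Finset.Icc a2 b2) ×ˢ (Finset.Icc a3 b3) : Finset (ℤ × ℤ × ℤ))

lemma mem_boxH3 {a1 b1 a2 b2 a3 b3 : ℤ} {x : Heisenberg} :
    x ∈ boxH3 a1 b1 a2 b2 a3 b3 ↔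
      (a1 ≤ x.1 ∧ x.1 ≤ b1) ∧ (a2 ≤ x.2.1 ∧ x.2.1 ≤ b2) ∧ (a3 ≤ x.2.2 ∧ x.2.2 ≤ b3) := by
  have h0 : x ∈ boxH3 a1 b1 a2 b2 a3 b3 ↔ (show ℤ×ℤ×ℤ from x) ∈
      (Finset.Icc a1 b1) ×ˢ (Finset.Icc a2 b2) ×ˢ (Finset.Icc a3 b3) := Iff.rfl
  rw [h0]
  exact Finset.mem_product.trans (and_congr Finset.mem_Icc
    (Finset.mem_product.trans (and_congr Finset.mem_Icc Finset.mem_Icc)))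

lemma card_boxH3 (a1 b1 a2 b2 a3 b3 : ℤ) :
    (boxH3 a1 b1 a2 b2 a3 b3).card = (b1+1-a1).toNat * ((b2+1-a2).toNat * (b3+1-a3).toNat) := by
  have h0 : (boxH3 a1 b1 a2 b2 a3 b3).card =
      ((Finset.Icc a1 b1) ×ˢ (Finset.Icc a2 b2) ×ˢ (Finset.Icc a3 b3)).card := rfl
  rw [h0, Finset.card_product, Finset.card_product, Int.card_Icc, Int.card_Icc, Int.card_Icc]

noncomputable def boxH (p : ℕ) : Finset Heisenberg := boxH3 0 p 0 p 0 ((p:ℤ)^2)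

lemma mem_boxH {p : ℕ} {x : Heisenberg} : x ∈ boxH p ↔
    (0 ≤ x.1 ∧ x.1 ≤ p) ∧ (0 ≤ x.2.1 ∧ x.2.1 ≤ p) ∧ (0 ≤ x.2.2 ∧ x.2.2 ≤ (p:ℤ)^2) :=
  mem_boxH3

lemma heis_len {G : Type} [Group G] {ℓ : G → ℕ} (hl : IsLengthFunction ℓ)
    (φ : Heisenberg →* G) (p : ℕ) (w : Heisenberg) (hw : w ∈ boxH p) :
    ℓ (φ w) ≤ (8 * (ℓ (φ (Hmk 1 0 0)) + ℓ (φ (Hmk 0 1 0)) + ℓ (φ (Hmk 0 0 1)))) * p := by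
  set lx := ℓ (φ (Hmk 1 0 0)) with hlx
  set ly := ℓ (φ (Hmk 0 1 0)) with hly
  set lz := ℓ (φ (Hmk 0 0 1)) with hlz
  rw [mem_boxH] at hw
  obtain ⟨⟨ha0, hap⟩, ⟨hb0, hbp⟩, ⟨hc0, hcp⟩⟩ := hw
  set a := w.1 with hadef
  set b := w.2.1 with hbdef
  set c := w.2.2 with hcdef
  have hwmk : w = Hmk a b c := rfl
  set α := a.toNat with hα
  set β := b.toNat with hβ
  have hαc : (α : ℤ) = a := Int.toNat_of_nonneg ha0
  have hβc : (β : ℤ) = b := Int.toNat_of_nonneg hb0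
  set δ : ℤ := c - a * b with hδ
  have hdec : w = (Hmk 1 0 0)^α * (Hmk 0 1 0)^β * Hmk 0 0 δ := by
    rw [hx_pow, hy_pow, Hmk_mul, Hmk_mul, hwmk]
    rw [hαc, hβc]
    norm_num
    congr 1
    rw [hδ]; ring
  have habp : 0 ≤ a*b ∧ a*b ≤ (p:ℤ)^2 := by
    constructor
    · exact mul_nonneg ha0 hb0
    · calc a*b ≤ (p:ℤ)*(p:ℤ) := mul_le_mul hap hbp hb0 (Int.natCast_nonneg p)
        _ = (p:ℤ)^2 := by ring
  set e : ℕ := δ.natAbs with he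
  have hep : e ≤ p^2 := by
    have h1 : -((p:ℤ)^2) ≤ δ := by rw [hδ]; omega
    have h2 : δ ≤ (p:ℤ)^2 := by rw [hδ]; omega
    have hpp : ((p^2 : ℕ) : ℤ) = (p:ℤ)^2 := by push_cast; ring
    omega
  set k : ℕ := e.sqrt with hk
  have hkp : k ≤ p := by
    have h1 : Nat.sqrt e ≤ Nat.sqrt (p^2) := Nat.sqrt_le_sqrt hep
    rwa [Nat.sqrt_eq'] at h1
  set r : ℕ := e - k^2 with hr
  have hrk : r ≤ 2*p := by
    have h1 : e < (k+1)^2 := by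
      have := Nat.lt_succ_sqrt' e
      simpa [Nat.succ_eq_add_one] using this
    have h2 : k^2 ≤ e := Nat.sqrt_le' e
    have h3 : (k+1)^2 = k*k + 2*k + 1 := by ring
    have h4 : k^2 = k*k := by ring
    rw [h3] at h1
    rw [hr, h4]
    have hkp' : k ≤ p := hkp
    generalize hkk : k*k = kk at h1 h2 ⊢
    omega
  have hze : ℓ (φ (Hmk 0 0 (e:ℤ))) ≤ (k*lx + k*lx) + (k*ly + k*ly) + r*lz := by
    rw [hz_decomp e, ← hk, ← hr]
    rw [map_mul, map_mul, map_mul, map_mul, map_pow, map_pow, map_inv, map_inv,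
      map_pow, map_pow, map_pow]
    have t1 := hl.2.2 ((φ (Hmk 1 0 0))^k * (φ (Hmk 0 1 0))^k * ((φ (Hmk 1 0 0))^k)⁻¹
      * ((φ (Hmk 0 1 0))^k)⁻¹) ((φ (Hmk 0 0 1))^r)
    have t2 := hl.2.2 ((φ (Hmk 1 0 0))^k * (φ (Hmk 0 1 0))^k * ((φ (Hmk 1 0 0))^k)⁻¹)
      (((φ (Hmk 0 1 0))^k)⁻¹)
    have t3 := hl.2.2 ((φ (Hmk 1 0 0))^k * (φ (Hmk 0 1 0))^k) (((φ (Hmk 1 0 0))^k)⁻¹)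
    have t4 := hl.2.2 ((φ (Hmk 1 0 0))^k) ((φ (Hmk 0 1 0))^k)
    have i1 : ℓ (((φ (Hmk 1 0 0))^k)⁻¹) = ℓ ((φ (Hmk 1 0 0))^k) := hl.2.1 _
    have i2 : ℓ (((φ (Hmk 0 1 0))^k)⁻¹) = ℓ ((φ (Hmk 0 1 0))^k) := hl.2.1 _
    have p1 : ℓ ((φ (Hmk 1 0 0))^k) ≤ k * lx := len_pow hl _ _
    have p2 : ℓ ((φ (Hmk 0 1 0))^k) ≤ k * ly := len_pow hl _ _
    have p3 : ℓ ((φ (Hmk 0 0 1))^r) ≤ r * lz := len_pow hl _ _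
    omega
  have hzδ : ℓ (φ (Hmk 0 0 δ)) ≤ (k*lx + k*lx) + (k*ly + k*ly) + r*lz := by
    rcases le_or_gt 0 δ with hδ0 | hδ0
    · have heδ : (e : ℤ) = δ := by rw [he]; omega
      rw [← heδ]
      exact hze
    · have hneg : Hmk 0 0 δ = (Hmk 0 0 (e:ℤ))⁻¹ := by
        rw [Hmk_inv]
        have heδ : -(e:ℤ) = δ := by rw [he]; omega
        norm_num [heδ]
      rw [hneg, map_inv, hl.2.1]
      exact hze
  have hfinal : ℓ (φ w) ≤ α * lx + β * ly + ((k*lx + k*lx) + (k*ly + k*ly) + r*lz) := by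
    rw [hdec, map_mul, map_mul, map_pow, map_pow]
    have t1 := hl.2.2 ((φ (Hmk 1 0 0))^α * (φ (Hmk 0 1 0))^β) (φ (Hmk 0 0 δ))
    have t2 := hl.2.2 ((φ (Hmk 1 0 0))^α) ((φ (Hmk 0 1 0))^β)
    have p1 : ℓ ((φ (Hmk 1 0 0))^α) ≤ α * lx := len_pow hl _ _
    have p2 : ℓ ((φ (Hmk 0 1 0))^β) ≤ β * ly := len_pow hl _ _
    omega
  have hαp : α ≤ p := by omega
  have hβp : β ≤ p := by omega
  have expand : (8 * (lx + ly + lz)) * p = 8*(p*lx) + 8*(p*ly) + 8*(p*lz) := by ring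
  have m1 : α * lx ≤ p * lx := Nat.mul_le_mul_right _ hαp
  have m2 : β * ly ≤ p * ly := Nat.mul_le_mul_right _ hβp
  have m3 : k * lx ≤ p * lx := Nat.mul_le_mul_right _ hkp
  have m4 : k * ly ≤ p * ly := Nat.mul_le_mul_right _ hkp
  have m5 : r * lz ≤ (2*p) * lz := Nat.mul_le_mul_right _ hrk
  have m6 : (2*p) * lz = p * lz + p * lz := by ring
  omega

set_option maxHeartbeats 1000000 in
lemma heis_fol (p : ℕ) (ε : ℝ) (hε : 0 < ε) :
    ∃ F : Finset Heisenberg, F.Nonempty ∧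
      ∀ a ∈ boxH p, (((F.image (fun x => a * x)) \ F).card : ℝ) ≤ ε * F.card := by
  set N : ℕ := p*p + 2*p + 1 + ⌈(8*(p:ℝ)+8)/ε⌉₊ with hN
  set M : ℕ := N*N with hM
  set Q : ℕ := p*p + p*N + p with hQ
  clear_value N M Q
  have hpN : p ≤ N := by omega
  have hQM : Q ≤ M := by
    have h1 : p*p + p ≤ N := by omega
    have h2 : N*(p+1) ≤ N*N := Nat.mul_le_mul_left N (by omega)
    have h3 : N*(p+1) = p*N + N := by ring
    omega
  set s : ℕ := N - p with hs
  set R : ℕ := M - Q with hR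
  clear_value s R
  set F : Finset Heisenberg := boxH3 (-(N:ℤ)) N (-(N:ℤ)) N (-(M:ℤ)) M with hF
  clear_value F
  have hmem0 : Hmk 0 0 0 ∈ F := by
    rw [hF, mem_boxH3, Hmk_fst, Hmk_snd1, Hmk_snd2]
    omega
  refine ⟨F, ⟨_, hmem0⟩, ?_⟩
  intro a ha
  rw [mem_boxH] at ha
  obtain ⟨⟨hα0, hαp⟩, ⟨hβ0, hβp⟩, ⟨hγ0, hγp⟩⟩ := ha
  have hamk : a = Hmk a.1 a.2.1 a.2.2 := rfl
  set α := a.1 with hαdef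
  set β := a.2.1 with hβdef
  set γ := a.2.2 with hγdef
  set Small : Finset Heisenberg := boxH3 (-(s:ℤ)) s (-(s:ℤ)) s (-(R:ℤ)) R with hSmall
  clear_value Small
  have hscast : (s:ℤ) = (N:ℤ) - (p:ℤ) := by
    rw [hs]; exact Nat.cast_sub hpN
  have hRcast : (R:ℤ) = (M:ℤ) - (Q:ℤ) := by
    rw [hR]; exact Nat.cast_sub hQM
  have hQcast : (Q:ℤ) = (p:ℤ)*(p:ℤ) + (p:ℤ)*(N:ℤ) + (p:ℤ) := by rw [hQ]; push_cast; ring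
  have hγp' : γ ≤ (p:ℤ)*(p:ℤ) := by
    have : (p:ℤ)^2 = (p:ℤ)*(p:ℤ) := by ring
    rw [this] at hγp
    exact hγp
  -- Small ⊆ F
  have hSF : Small ⊆ F := by
    intro w hw
    rw [hSmall, mem_boxH3] at hw
    rw [hF, mem_boxH3]
    omega
  -- Small ⊆ a • F
  have hSaF : Small ⊆ F.image (fun x => a * x) := by
    intro w hw
    rw [hSmall, mem_boxH3] at hw
    refine Finset.mem_image.mpr ⟨a⁻¹ * w, ?_, by rw [mul_inv_cancel_left]⟩
    have hwmk : w = Hmk w.1 w.2.1 w.2.2 := rfl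
    have hcomp : a⁻¹ * w = Hmk (w.1 - α) (w.2.1 - β) (w.2.2 - γ + α*β - α*w.2.1) := by
      rw [hamk, Hmk_inv]
      conv_lhs => rw [hwmk]
      rw [Hmk_mul]
      exact Hmk_congr (by ring) (by ring) (by ring)
    rw [hF, hcomp, mem_boxH3, Hmk_fst, Hmk_snd1, Hmk_snd2]
    have hαβ : 0 ≤ α*β ∧ α*β ≤ (p:ℤ)*(p:ℤ) := by
      constructor
      · exact mul_nonneg hα0 hβ0
      · exact mul_le_mul hαp hβp hβ0 (Int.natCast_nonneg p)
    have hαw : α*w.2.1 ≤ (p:ℤ)*(s:ℤ) ∧ -((p:ℤ)*(s:ℤ)) ≤ α*w.2.1 := by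
      have hs0 : (0:ℤ) ≤ (s:ℤ) := Int.natCast_nonneg s
      constructor
      · calc α*w.2.1 ≤ α*(s:ℤ) := mul_le_mul_of_nonneg_left hw.2.1.2 hα0
          _ ≤ (p:ℤ)*(s:ℤ) := mul_le_mul_of_nonneg_right hαp hs0
      · have h1 : α*(-(s:ℤ)) ≤ α*w.2.1 := mul_le_mul_of_nonneg_left hw.2.1.1 hα0
        have h2 : -((p:ℤ)*(s:ℤ)) ≤ α*(-(s:ℤ)) := by
          have := mul_le_mul_of_nonneg_right hαp hs0
          linarith
        linarith
    have hps : (p:ℤ)*(s:ℤ) = (p:ℤ)*(N:ℤ) - (p:ℤ)*(p:ℤ) := by rw [hscast]; ring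
    omega
  -- card bound
  have hcard1 : (((F.image (fun x => a * x)) \ F).card : ℝ) ≤ (F.card : ℝ) - (Small.card : ℝ) := by
    have sub1 : (F.image (fun x => a * x)) \ F ⊆ (F.image (fun x => a * x)) \ Small :=
      Finset.sdiff_subset_sdiff (Finset.Subset.refl _) hSF
    have h1 := Finset.card_le_card sub1
    rw [Finset.card_sdiff_of_subset hSaF] at h1
    rw [Finset.card_image_of_injective _ (mul_right_injective a)] at h1
    have h2 := (Nat.cast_le (α := ℝ)).mpr h1
    rw [Nat.cast_sub (Finset.card_le_card hSF)] at h2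
    exact h2
  refine hcard1.trans ?_
  -- card formulas
  have hcardF : (F.card : ℝ) = (2*(N:ℝ)+1)^2 * (2*(M:ℝ)+1) := by
    rw [hF, card_boxH3]
    have e1 : ((N:ℤ)+1-(-(N:ℤ))).toNat = 2*N+1 := by omega
    have e2 : ((M:ℤ)+1-(-(M:ℤ))).toNat = 2*M+1 := by omega
    rw [e1, e2]
    push_cast
    ring
  have hcardS : (Small.card : ℝ) = (2*(s:ℝ)+1)^2 * (2*(R:ℝ)+1) := by
    rw [hSmall, card_boxH3]
    have e1 : ((s:ℤ)+1-(-(s:ℤ))).toNat = 2*s+1 := by omega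
    have e2 : ((R:ℤ)+1-(-(R:ℤ))).toNat = 2*R+1 := by omega
    rw [e1, e2]
    push_cast
    ring
  rw [hcardF, hcardS]
  -- real inequality
  obtain ⟨n, hn⟩ : ∃ n : ℝ, n = (N:ℝ) := ⟨_, rfl⟩
  obtain ⟨q, hq'⟩ : ∃ q : ℝ, q = (p:ℝ) := ⟨_, rfl⟩
  have hq0 : 0 ≤ q := by rw [hq']; exact Nat.cast_nonneg p
  have hn0 : 0 ≤ n := by rw [hn]; exact Nat.cast_nonneg N
  have hsr : ((s:ℕ):ℝ) = n - q := by
    rw [hn, hq', hs]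
    exact Nat.cast_sub hpN
  have hMr : ((M:ℕ):ℝ) = n*n := by rw [hn, hM]; push_cast; ring
  have hQrR : ((Q:ℕ):ℝ) = q*q + q*n + q := by rw [hn, hq', hQ]; push_cast; ring
  have hRr : ((R:ℕ):ℝ) = n*n - (q*q + q*n + q) := by
    rw [hR]
    rw [show ((M - Q : ℕ):ℝ) = ((M:ℕ):ℝ) - ((Q:ℕ):ℝ) from Nat.cast_sub hQM]
    rw [hMr, hQrR]
  have hnq : q*q + 2*q + 1 ≤ n := by
    have h1 : p*p + 2*p + 1 ≤ N := by omega
    have h2 : ((p*p + 2*p + 1 : ℕ):ℝ) ≤ (N:ℝ) := Nat.cast_le.mpr h1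
    push_cast at h2
    rw [hn, hq']
    linarith
  have hεn : 8*q + 8 ≤ ε*n := by
    have h1 : (⌈(8*(p:ℝ)+8)/ε⌉₊ : ℕ) ≤ N := by omega
    have h2 : ((⌈(8*(p:ℝ)+8)/ε⌉₊ : ℕ):ℝ) ≤ (N:ℝ) := Nat.cast_le.mpr h1
    have h3 : (8*(p:ℝ)+8)/ε ≤ (⌈(8*(p:ℝ)+8)/ε⌉₊ : ℝ) := Nat.le_ceil _
    have h4 : (8*(p:ℝ)+8)/ε ≤ (N:ℝ) := le_trans h3 h2
    rw [div_le_iff₀ hε] at h4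
    rw [hn, hq']
    nlinarith
  rw [hsr, hMr, hRr, ← hn]
  obtain ⟨c1, hc1⟩ : ∃ c1 : ℝ, c1 = 2*n+1 := ⟨_, rfl⟩
  obtain ⟨c3, hc3⟩ : ∃ c3 : ℝ, c3 = 2*(n*n)+1 := ⟨_, rfl⟩
  obtain ⟨Qr, hQrr⟩ : ∃ Qr : ℝ, Qr = q*q + q*n + q := ⟨_, rfl⟩
  rw [show (2*n+1 : ℝ) = c1 from hc1.symm,
    show (2*(n*n)+1 : ℝ) = c3 from hc3.symm,
    show (2*(n-q)+1 : ℝ) = c1 - 2*q from by rw [hc1]; ring,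
    show (2*(n*n - (q*q+q*n+q))+1 : ℝ) = c3 - 2*Qr from by rw [hc3, hQrr]; ring]
  have hQr0 : 0 ≤ Qr := by
    rw [hQrr]
    have : 0 ≤ q*n := mul_nonneg hq0 hn0
    nlinarith
  have hc10 : 0 ≤ c1 := by rw [hc1]; linarith
  have hc30 : 0 ≤ c3 := by rw [hc3]; nlinarith
  have hb10 : 0 ≤ c1 - 2*q := by rw [hc1]; nlinarith
  have hA1 : 8*q ≤ ε*c1 := by
    have h : ε*c1 = 2*(ε*n) + ε := by rw [hc1]; ring
    rw [h]
    linarith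
  have hA2 : 4*Qr ≤ ε*c3 := by
    have e1 : ε*c3 = 2*((ε*n)*n) + ε := by rw [hc3]; ring
    have e2 : (8*q+8)*n ≤ (ε*n)*n := mul_le_mul_of_nonneg_right hεn hn0
    have e3 : q*q + q ≤ n := by nlinarith
    have e4 : 4*Qr ≤ 4*n + 4*(q*n) := by rw [hQrr]; nlinarith
    have e5 : 4*n + 4*(q*n) ≤ (8*q+8)*n := by nlinarith [mul_nonneg hq0 hn0]
    rw [e1]
    nlinarith [mul_nonneg (mul_nonneg hε.le hn0) hn0]
  have key1 : c1^2*c3 - (c1-2*q)^2*(c3-2*Qr)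
      = 2*q*((c1 + (c1-2*q))*c3) + (c1-2*q)^2*(2*Qr) := by ring
  have key2 : (c1 + (c1-2*q))*c3 ≤ 2*(c1*c3) := by nlinarith [mul_nonneg hq0 hc30]
  have key3 : 2*q*((c1 + (c1-2*q))*c3) ≤ 2*q*(2*(c1*c3)) :=
    mul_le_mul_of_nonneg_left key2 (by linarith)
  have key4 : (c1-2*q)^2*(2*Qr) ≤ c1^2*(2*Qr) := by
    refine mul_le_mul_of_nonneg_right ?_ (by linarith)
    exact pow_le_pow_left₀ hb10 (by linarith : c1 - 2*q ≤ c1) 2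
  have key5 : 4*q*(c1*c3) ≤ (ε*c1)*(c1*c3)/2 := by
    have h := mul_le_mul_of_nonneg_right hA1 (mul_nonneg hc10 hc30)
    linarith
  have key6 : c1^2*(2*Qr) ≤ (ε*c3)*(c1^2)/2 := by
    have h := mul_le_mul_of_nonneg_right hA2 (mul_nonneg hc10 hc10)
    have hsq : c1^2 = c1*c1 := by ring
    rw [hsq]
    linarith
  have key7 : (ε*c1)*(c1*c3)/2 + (ε*c3)*(c1^2)/2 = ε*(c1^2*c3) := by ring
  calc c1^2*c3 - (c1-2*q)^2*(c3-2*Qr)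
      = 2*q*((c1 + (c1-2*q))*c3) + (c1-2*q)^2*(2*Qr) := key1
    _ ≤ 2*q*(2*(c1*c3)) + c1^2*(2*Qr) := add_le_add key3 key4
    _ = 4*q*(c1*c3) + c1^2*(2*Qr) := by ring
    _ ≤ (ε*c1)*(c1*c3)/2 + (ε*c3)*(c1^2)/2 := add_le_add key5 key6
    _ = ε*(c1^2*c3) := key7

lemma heis_no_haagerup {G : Type} [Group G] {ℓ : G → ℕ} {C : ℝ} (hl : IsLengthFunction ℓ)
    (hC : GroupHaagerupCond ℓ C) (φ : Heisenberg →* G) (hφ : Function.Injective φ) : False := by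
  refine contra hl hC φ hφ (fun p => boxH p)
    (8 * (ℓ (φ (Hmk 1 0 0)) + ℓ (φ (Hmk 0 1 0)) + ℓ (φ (Hmk 0 0 1)))) ?_ ?_ ?_
  · intro p
    show (p:ℝ)^4 ≤ ((boxH p).card : ℝ)
    have hbox : boxH p = boxH3 0 (p:ℤ) 0 (p:ℤ) 0 ((p:ℤ)^2) := rfl
    rw [hbox, card_boxH3]
    have e1 : ((p:ℤ)+1-0).toNat = p+1 := by omega
    have e3 : ((p:ℤ)^2+1-0).toNat = p*p+1 := by
      have hpp : ((p*p : ℕ):ℤ) = (p:ℤ)^2 := by push_cast; ring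
      omega
    rw [e1, e3]
    have hcast : (((p+1) * ((p+1) * (p*p+1)) : ℕ) : ℝ)
        = ((p:ℝ)+1)*(((p:ℝ)+1)*((p:ℝ)*(p:ℝ)+1)) := by push_cast; ring
    rw [hcast]
    have hp0 : (0:ℝ) ≤ p := Nat.cast_nonneg p
    nlinarith [hp0, mul_nonneg hp0 hp0, mul_nonneg (mul_nonneg hp0 hp0) hp0,
      mul_nonneg (mul_nonneg (mul_nonneg hp0 hp0) hp0) hp0]
  · intro p a ha
    exact heis_len hl φ p a ha
  · intro p ε hε
    exact heis_fol p ε hε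

end Aux

/-- If a finitely generated amenable group `G` satisfies the Haagerup-type condition for
some length function `ℓ`, then the growth rate of `G` (measured by any word-length `ℓ_S`
of a finite symmetric generating set `S`) is at most `3`.  Consequently no group
containing `ℤ⁴` or the discrete Heisenberg group (both of growth `4`, so without cubic
growth bound) admits a length function satisfying the Haagerup-type condition. -/
theorem stmt_13 :
    (∀ (G : Type) [Group G], ∀ (S : Finset G),
      (∀ s ∈ S, s⁻¹ ∈ S) →
      (∀ g : G, ∃ l : List G, (∀ x ∈ l, x ∈ S) ∧ l.prod = g) →
      FolnerAmenable G →
      ∀ (ℓ : G → ℕ) (C : ℝ), IsLengthFunction ℓ → GroupHaagerupCond ℓ C →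
        PolyGrowthBound (wordLength S) 3) ∧
    (∀ (G : Type) [Group G],
      ((∃ φ : Multiplicative (ℤ × ℤ × ℤ × ℤ) →* G, Function.Injective φ) ∨
        (∃ φ : Heisenberg →* G, Function.Injective φ)) →
      ¬ ∃ (ℓ : G → ℕ) (C : ℝ), IsLengthFunction ℓ ∧ GroupHaagerupCond ℓ C) := by
  constructor
  · intro G _ S _ hgen ham ℓ C hl hC
    exact Aux.part1 G S hgen ham ℓ C hl hC
  · rintro G _ hemb ⟨ℓ, C, hl, hC⟩
    rcases hemb with ⟨φ, hφ⟩ | ⟨φ, hφ⟩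
    · exact Aux.z4_no_haagerup hl hC φ hφ
    · exact Aux.heis_no_haagerup hl hC φ hφ
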